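/- Let G = (V,E) be a DAG and let G_R be its reverse DAG. Then for every visit rule r for G_R, the pebbling number of G satisfies p(G) ≥ b_r(G_R), where b_r(G_R) is the minimum of b_r(ψ) over all r-visits ψ of G_R. -/

import Mathlib

universe u

variable {V : Type u}

/-- Acyclicity of an edge relation (DAG condition). -/
def Acyclic (E : V → V → Prop) : Prop := ∀ v : V, ¬ Relation.TransGen E v v

/-- Immediate predecessors of a vertex. -/
def pre (E : V → V → Prop) (v : V) : Set V := {u | E u v}

/-- Immediate successors of a vertex. -/
def suc (E : V → V → Prop) (v : V) : Set V := {u | E v u}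

/-- The reverse DAG edge relation. -/
def Erev (E : V → V → Prop) : V → V → Prop := fun u v => E v u

/-- `r` is a visit rule for the DAG with edge relation `E`. -/
def VisitRule (E : V → V → Prop) (r : V → Set (Set V)) : Prop :=
  ∀ v : V, (r v).Nonempty ∧ ∀ Q ∈ r v, Q ⊆ pre E v

/-- `ψ` is an `r`-sequence. -/
def IsRSeq (r : V → Set (Set V)) (ψ : List V) : Prop :=
  ψ.Nodup ∧ ∀ i : Fin ψ.length, ∃ Q ∈ r (ψ.get i), ∀ u ∈ Q, u ∈ ψ.take i.1

/-- `ψ` is an `r`-visit: an `r`-sequence containing all vertices. -/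
def IsRVisit (r : V → Set (Set V)) (ψ : List V) : Prop :=
  IsRSeq r ψ ∧ ∀ v : V, v ∈ ψ

/-- The `r`-boundary of a sequence. -/
def boundary (r : V → Set (Set V)) (ψ : List V) : Set V :=
  {v | v ∉ ψ ∧ ∃ Q ∈ r v, Q ≠ (∅ : Set V) ∧ ∀ u ∈ Q, u ∈ ψ}

/-- The `r`-boundary complexity of a sequence. -/
noncomputable def bnd (r : V → Set (Set V)) (ψ : List V) : ℕ :=
  (Finset.Icc 1 ψ.length).sup fun i => (boundary r (ψ.take i)).ncard

/-- The `r`-boundary complexity of a DAG: minimum over `r`-visits. -/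
noncomputable def bndMin (r : V → Set (Set V)) : ℕ :=
  sInf {m | ∃ ψ : List V, IsRVisit r ψ ∧ bnd r ψ = m}

/-- One move of the (one-color) pebble game: place a pebble on a vertex all of whose
immediate predecessors carry pebbles, or remove a pebble. -/
def PebbleStep [DecidableEq V] (E : V → V → Prop) (s t : Finset V) : Prop :=
  (∃ v, v ∉ s ∧ (∀ u, E u v → u ∈ s) ∧ t = insert v s) ∨ (∃ v ∈ s, t = s.erase v)

/-- A complete pebbling schedule, given by its list of configurations, starting from
no pebbles, in which every vertex is pebbled at least once. -/
def IsPebbling [DecidableEq V] (E : V → V → Prop) (φ : List (Finset V)) : Prop :=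
  φ.head? = some (∅ : Finset V) ∧ List.Chain' (PebbleStep E) φ ∧ ∀ v : V, ∃ s ∈ φ, v ∈ s

/-- Maximum number of pebbles simultaneously on the DAG. -/
def maxPebbles [DecidableEq V] (φ : List (Finset V)) : ℕ :=
  (φ.map Finset.card).foldr max 0

/-- The pebbling number of a DAG. -/
noncomputable def pebblingNumber [DecidableEq V] (E : V → V → Prop) : ℕ :=
  sInf {m | ∃ φ : List (Finset V), IsPebbling E φ ∧ maxPebbles φ ≤ m}

section Aux
variable [DecidableEq V]

lemma aux_chain'_mid {α : Type*} {R : α → α → Prop} :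
    ∀ (l₁ : List α) {a b : α} {l₂ : List α}, List.Chain' R (l₁ ++ a :: b :: l₂) → R a b
  | [], a, b, l₂, h => (List.isChain_cons_cons.mp h).1
  | _ :: l₁, a, b, l₂, h => aux_chain'_mid l₁ h.tail

lemma aux_placed (E : V → V → Prop) :
    ∀ (l : List (Finset V)), List.Chain' (PebbleStep E) l → ∀ u : V, (∃ c ∈ l, u ∈ c) →
    (∃ a, l.head? = some a ∧ u ∈ a) ∨ ∃ c ∈ l, ∀ x, E x u → x ∈ c := by
  intro l
  induction l with
  | nil => rintro _ u ⟨c, hc, _⟩; simp at hc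
  | cons a rest ih =>
    rintro h u ⟨c, hc, huc⟩
    rcases List.mem_cons.mp hc with rfl | hc
    · exact Or.inl ⟨c, rfl, huc⟩
    · rcases ih h.tail u ⟨c, hc, huc⟩ with ⟨b, hb, hub⟩ | ⟨c', hc', hp⟩
      · rcases rest with _ | ⟨b', t⟩
        · simp at hb
        · simp only [List.head?_cons, Option.some.injEq] at hb
          subst hb
          rcases (List.isChain_cons_cons.mp h).1 with ⟨v, hv, hpre, hins⟩ | ⟨v, hv, hrem⟩
          · subst hins
            rcases Finset.mem_insert.mp hub with rfl | hua
            · exact Or.inr ⟨a, List.mem_cons_self, hpre⟩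
            · exact Or.inl ⟨a, rfl, hua⟩
          · subst hrem
            exact Or.inl ⟨a, rfl, Finset.mem_of_mem_erase hub⟩
      · exact Or.inr ⟨c', List.mem_cons_of_mem _ hc', hp⟩

lemma aux_isRSeq_append {r : V → Set (Set V)} {ψ : List V} {w : V}
    (h : IsRSeq r ψ) (hw : w ∉ ψ) (hQ : ∃ Q ∈ r w, ∀ u ∈ Q, u ∈ ψ) :
    IsRSeq r (ψ ++ [w]) := by
  constructor
  · exact List.nodup_append'.mpr ⟨h.1, List.nodup_singleton w, by simpa using hw⟩
  · intro i
    have hlen : (ψ ++ [w]).length = ψ.length + 1 := by simp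
    rcases lt_or_ge i.1 ψ.length with hi | hi
    · have hget : (ψ ++ [w]).get i = ψ.get ⟨i.1, hi⟩ := by
        simp [List.get_eq_getElem, List.getElem_append_left hi]
      obtain ⟨Q, hQr, hQs⟩ := h.2 ⟨i.1, hi⟩
      refine ⟨Q, by rwa [hget], fun u hu => ?_⟩
      rw [List.take_append_of_le_length (le_of_lt hi)]
      exact hQs u hu
    · have hi' : i.1 = ψ.length := by
        have h2 := lt_of_lt_of_eq i.2 hlen; omega
      have hget : (ψ ++ [w]).get i = w := by
        simp [List.get_eq_getElem, hi']
      obtain ⟨Q, hQr, hQs⟩ := hQ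
      refine ⟨Q, by rwa [hget], fun u hu => ?_⟩
      rw [hi', List.take_append_of_le_length (le_refl _), List.take_length]
      exact hQs u hu

lemma aux_card_le_maxPebbles {φ : List (Finset V)} {c : Finset V} (hc : c ∈ φ) :
    c.card ≤ (φ.map Finset.card).foldr max 0 := by
  induction φ with
  | nil => simp at hc
  | cons a l ih =>
    rcases List.mem_cons.mp hc with rfl | hc
    · simp only [List.map_cons, List.foldr_cons]; exact le_max_left _ _
    · simp only [List.map_cons, List.foldr_cons]; exact le_trans (ih hc) (le_max_right _ _)

end Aux

section Exists
variable [Fintype V] [DecidableEq V]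

lemma aux_exists_chain (E : V → V → Prop) (hG : Acyclic E) :
    ∀ (n : ℕ) (S : Finset V), S.card = n → (∀ v ∈ S, ∀ u, E u v → u ∈ S) →
    ∃ φ : List (Finset V), φ.head? = some (∅ : Finset V) ∧ List.Chain' (PebbleStep E) φ ∧
      φ.getLast? = some S := by
  intro n
  induction n with
  | zero =>
    intro S hcard _
    rw [Finset.card_eq_zero] at hcard
    subst hcard
    exact ⟨[∅], rfl, List.isChain_singleton _, rfl⟩
  | succ n ih =>
    intro S hcard hclosed
    have hne : (↑S : Set V).Nonempty := by
      rw [Finset.coe_nonempty, ← Finset.card_pos, hcard]; omega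
    haveI : IsTrans V (fun a b : V => Relation.TransGen E b a) :=
      ⟨fun a b c h1 h2 => h2.trans h1⟩
    haveI : IsIrrefl V (fun a b : V => Relation.TransGen E b a) := ⟨fun a h => hG a h⟩
    have hwf : WellFounded (fun a b : V => Relation.TransGen E b a) :=
      Finite.wellFounded_of_trans_of_irrefl _
    obtain ⟨v, hvS, hmax⟩ := hwf.has_min ↑S hne
    have hvmax : ∀ w ∈ S, ¬ E v w := fun w hw hE => hmax w hw (Relation.TransGen.single hE)
    have hcard' : (S.erase v).card = n := by
      rw [Finset.card_erase_of_mem hvS, hcard]; rfl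
    have hclosed' : ∀ w ∈ S.erase v, ∀ u, E u w → u ∈ S.erase v := by
      intro w hw u hE
      have hwS := Finset.mem_of_mem_erase hw
      have huS := hclosed w hwS u hE
      refine Finset.mem_erase.mpr ⟨?_, huS⟩
      rintro rfl
      exact hvmax w hwS hE
    obtain ⟨φ, hhead, hchain, hlast⟩ := ih (S.erase v) hcard' hclosed'
    refine ⟨φ ++ [S], ?_, ?_, List.getLast?_concat⟩
    · rcases φ with _ | ⟨a, t⟩
      · simp at hhead
      · simpa using hhead
    · apply List.isChain_append.mpr
      refine ⟨hchain, List.isChain_singleton _, ?_⟩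
      intro x hx y hy
      simp only [List.head?_cons, Option.mem_def, Option.some.injEq] at hy
      rw [hlast] at hx
      simp only [Option.mem_def, Option.some.injEq] at hx
      subst hx; subst hy
      refine Or.inl ⟨v, ?_, ?_, ?_⟩
      · simp
      · intro u hE
        have huS := hclosed v hvS u hE
        refine Finset.mem_erase.mpr ⟨?_, huS⟩
        rintro rfl
        exact hG _ (Relation.TransGen.single hE)
      · rw [Finset.insert_erase hvS]

end Exists

lemma aux_scan [DecidableEq V] (E : V → V → Prop) (hG : Acyclic E)
    (r : V → Set (Set V)) (hr : VisitRule (Erev E) r)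
    (φ : List (Finset V)) (hhead : φ.head? = some (∅ : Finset V))
    (hchain : List.Chain' (PebbleStep E) φ) (hcompl : ∀ v : V, ∃ s ∈ φ, v ∈ s) :
    ∀ (l₂ l₁ : List (Finset V)) (s : Finset V), φ = l₁ ++ s :: l₂ →
    ∃ ψ : List V, IsRSeq r ψ ∧ boundary r ψ ⊆ ↑s ∧
      (∀ i ≤ ψ.length, ∃ c ∈ s :: l₂, boundary r (ψ.take i) ⊆ ↑c) ∧
      (∀ v : V, v ∉ ψ → v ∈ s ∨ (∃ c ∈ l₁, v ∈ c) ∨ ∀ c ∈ s :: l₂, v ∉ c) := by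
  intro l₂
  induction l₂ with
  | nil =>
    intro l₁ s _
    have hbe : boundary r ([] : List V) ⊆ ↑s := by
      rintro v ⟨-, Q, -, hne, hsub⟩
      obtain ⟨x, hx⟩ := Set.nonempty_iff_ne_empty.mpr hne
      exact absurd (hsub x hx) (List.not_mem_nil)
    refine ⟨[], ⟨List.nodup_nil, fun i => absurd i.2 (by simp)⟩, hbe, ?_, ?_⟩
    · intro i hi
      have : i = 0 := Nat.le_zero.mp hi
      subst this
      exact ⟨s, List.mem_cons_self, hbe⟩
    · intro v _
      by_cases hvs : v ∈ s
      · exact Or.inl hvs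
      · refine Or.inr (Or.inr ?_)
        intro c hc
        rcases List.mem_cons.mp hc with rfl | hc
        · exact hvs
        · exact absurd hc (List.not_mem_nil)
  | cons s' l₂ ih =>
    intro l₁ s hdecomp
    have hdecomp' : φ = (l₁ ++ [s]) ++ s' :: l₂ := by rw [hdecomp]; simp
    obtain ⟨ψ, hseq, hbd, hpref, hD⟩ := ih (l₁ ++ [s]) s' hdecomp'
    have hchain' := hchain
    rw [hdecomp] at hchain'
    have hstep : PebbleStep E s s' := aux_chain'_mid l₁ hchain'
    rcases hstep with ⟨w, hws, hpre, rfl⟩ | ⟨w, hws, rfl⟩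
    · -- placement of w : s' = insert w s
      by_cases hvis : w ∉ ψ ∧ (w ∈ boundary r ψ ∨ ∀ c ∈ l₁, w ∉ c)
      · -- visit w
        obtain ⟨hwψ, hcond⟩ := hvis
        have hQ : ∃ Q ∈ r w, ∀ u ∈ Q, u ∈ ψ := by
          rcases hcond with hb | hfirst
          · obtain ⟨-, Q, hQr, -, hsub⟩ := hb
            exact ⟨Q, hQr, hsub⟩
          · obtain ⟨Q, hQr⟩ := (hr w).1
            refine ⟨Q, hQr, fun u hu => ?_⟩
            have hEwu : E w u := (hr w).2 Q hQr hu
            by_contra huψ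
            have hc1 : ∃ c ∈ l₁ ++ [s], u ∈ c := by
              rcases hD u huψ with h | h | h
              · rcases Finset.mem_insert.mp h with rfl | hus
                · exact absurd hEwu (fun hE => hG _ (Relation.TransGen.single hE))
                · exact ⟨s, by simp, hus⟩
              · exact h
              · obtain ⟨c, hcφ, huc⟩ := hcompl u
                rw [hdecomp'] at hcφ
                rcases List.mem_append.mp hcφ with hc | hc
                · exact ⟨c, hc, huc⟩
                · exact absurd huc (h c hc)
            have hch1 : List.Chain' (PebbleStep E) (l₁ ++ [s]) := by
              have h' := hchain
              rw [hdecomp'] at h'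
              exact h'.left_of_append
            rcases aux_placed E _ hch1 u hc1 with ⟨a, ha, hua⟩ | ⟨c, hcm, hcp⟩
            · have h0 := hhead
              rw [hdecomp', List.head?_append, ha] at h0
              simp only [Option.some_or, Option.some.injEq] at h0
              subst h0
              exact absurd hua (Finset.notMem_empty u)
            · have hwc := hcp w hEwu
              rcases List.mem_append.mp hcm with hc | hc
              · exact hfirst c hc hwc
              · rw [List.mem_singleton] at hc
                subst hc
                exact hws hwc
        have hB : boundary r (ψ ++ [w]) ⊆ ↑s := by
          rintro v ⟨hvm, Q, hQr, hne, hsub⟩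
          have hvw : v ≠ w := by
            rintro rfl
            exact hvm (List.mem_append_right _ (List.mem_singleton_self _))
          by_cases hwQ : w ∈ Q
          · have hEvw : E v w := (hr v).2 Q hQr hwQ
            exact Finset.mem_coe.mpr (hpre v hEvw)
          · have hvb : v ∈ boundary r ψ := by
              refine ⟨fun h => hvm (List.mem_append_left _ h), Q, hQr, hne, fun u hu => ?_⟩
              rcases List.mem_append.mp (hsub u hu) with h | h
              · exact h
              · rw [List.mem_singleton] at h
                subst h
                exact absurd hu hwQ
            have h' := hbd hvb
            rcases Finset.mem_insert.mp h' with rfl | h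
            · exact absurd rfl hvw
            · exact h
        refine ⟨ψ ++ [w], aux_isRSeq_append hseq hwψ hQ, hB, ?_, ?_⟩
        · intro i hi
          by_cases hi' : i ≤ ψ.length
          · obtain ⟨c, hc, hsub⟩ := hpref i hi'
            refine ⟨c, List.mem_cons_of_mem _ hc, ?_⟩
            rwa [List.take_append_of_le_length hi']
          · have hlen : (ψ ++ [w]).length = ψ.length + 1 := by simp
            have : i = ψ.length + 1 := by rw [hlen] at hi; omega
            subst this
            rw [List.take_of_length_le (by simp)]
            exact ⟨s, List.mem_cons_self, hB⟩
        · intro v hv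
          have hvψ : v ∉ ψ := fun h => hv (List.mem_append_left _ h)
          rcases hD v hvψ with h | ⟨c, hc, hvc⟩ | h
          · rcases Finset.mem_insert.mp h with rfl | hvs
            · exact absurd (List.mem_append_right _ (List.mem_singleton_self v)) hv
            · exact Or.inl hvs
          · rcases List.mem_append.mp hc with hc | hc
            · exact Or.inr (Or.inl ⟨c, hc, hvc⟩)
            · rw [List.mem_singleton] at hc
              subst hc
              exact Or.inl hvc
          · by_cases hvs : v ∈ s
            · exact Or.inl hvs
            · refine Or.inr (Or.inr fun c hc => ?_)
              rcases List.mem_cons.mp hc with rfl | hc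
              · exact hvs
              · exact h c hc
      · -- do not visit
        have hB : boundary r ψ ⊆ ↑s := by
          intro v hvb
          have h' := hbd hvb
          rcases Finset.mem_insert.mp h' with rfl | h
          · exact absurd ⟨hvb.1, Or.inl hvb⟩ hvis
          · exact h
        refine ⟨ψ, hseq, hB, ?_, ?_⟩
        · intro i hi
          obtain ⟨c, hc, hsub⟩ := hpref i hi
          exact ⟨c, List.mem_cons_of_mem _ hc, hsub⟩
        · intro v hvψ
          rcases hD v hvψ with h | ⟨c, hc, hvc⟩ | h
          · rcases Finset.mem_insert.mp h with rfl | hvs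
            · have hnot : ¬ (v ∈ boundary r ψ ∨ ∀ c ∈ l₁, v ∉ c) := fun hor => hvis ⟨hvψ, hor⟩
              push_neg at hnot
              obtain ⟨c, hc, hvc⟩ := hnot.2
              exact Or.inr (Or.inl ⟨c, hc, hvc⟩)
            · exact Or.inl hvs
          · rcases List.mem_append.mp hc with hc | hc
            · exact Or.inr (Or.inl ⟨c, hc, hvc⟩)
            · rw [List.mem_singleton] at hc
              subst hc
              exact Or.inl hvc
          · by_cases hvs : v ∈ s
            · exact Or.inl hvs
            · refine Or.inr (Or.inr fun c hc => ?_)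
              rcases List.mem_cons.mp hc with rfl | hc
              · exact hvs
              · exact h c hc
    · -- removal of w : s' = s.erase w
      refine ⟨ψ, hseq, ?_, ?_, ?_⟩
      · intro v hv
        exact Finset.mem_coe.mpr (Finset.mem_of_mem_erase (Finset.mem_coe.mp (hbd hv)))
      · intro i hi
        obtain ⟨c, hc, hsub⟩ := hpref i hi
        exact ⟨c, List.mem_cons_of_mem _ hc, hsub⟩
      · intro v hvψ
        rcases hD v hvψ with h | ⟨c, hc, hvc⟩ | h
        · exact Or.inl (Finset.mem_of_mem_erase h)
        · rcases List.mem_append.mp hc with hc | hc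
          · exact Or.inr (Or.inl ⟨c, hc, hvc⟩)
          · rw [List.mem_singleton] at hc
            subst hc
            exact Or.inl hvc
        · by_cases hvs : v ∈ s
          · exact Or.inl hvs
          · refine Or.inr (Or.inr fun c hc => ?_)
            rcases List.mem_cons.mp hc with rfl | hc
            · exact hvs
            · exact h c hc

lemma aux_mem_of_getLast? {α : Type*} {l : List α} {a : α} (h : l.getLast? = some a) :
    a ∈ l := by
  obtain ⟨hne, rfl⟩ := List.mem_getLast?_eq_getLast (Option.mem_def.mpr h)
  exact List.getLast_mem hne

theorem stmt_0 {V : Type u} [Fintype V] [DecidableEq V] (E : V → V → Prop)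
    (hG : Acyclic E) (r : V → Set (Set V)) (hr : VisitRule (Erev E) r) :
    bndMin r ≤ pebblingNumber E := by
  obtain ⟨φ₀, hh0, hc0, hl0⟩ :=
    aux_exists_chain E hG (Finset.univ : Finset V).card Finset.univ rfl
      (fun v _ u _ => Finset.mem_univ u)
  have hP0 : IsPebbling E φ₀ :=
    ⟨hh0, hc0, fun v => ⟨Finset.univ, aux_mem_of_getLast? hl0, Finset.mem_univ v⟩⟩
  have hSne : {m | ∃ φ : List (Finset V), IsPebbling E φ ∧ maxPebbles φ ≤ m}.Nonempty :=
    ⟨maxPebbles φ₀, φ₀, hP0, le_rfl⟩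
  obtain ⟨φ, hφ, hle⟩ := Nat.sInf_mem hSne
  obtain ⟨hd, tl, rfl⟩ : ∃ hd tl, φ = hd :: tl := by
    cases φ with
    | nil => exact absurd hφ.1 (by simp)
    | cons a t => exact ⟨a, t, rfl⟩
  have hhd : hd = ∅ := by simpa using hφ.1
  subst hhd
  obtain ⟨ψ, hseq, hbd, hpref, hD⟩ :=
    aux_scan E hG r hr (∅ :: tl) hφ.1 hφ.2.1 hφ.2.2 tl [] ∅ rfl
  have hvisit : IsRVisit r ψ := by
    refine ⟨hseq, fun v => ?_⟩
    by_contra hv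
    rcases hD v hv with h | ⟨c, hc, _⟩ | h
    · exact absurd h (Finset.notMem_empty v)
    · exact absurd hc (List.not_mem_nil)
    · obtain ⟨c, hc, hvc⟩ := hφ.2.2 v
      exact h c hc hvc
  have hbnd : bnd r ψ ≤ pebblingNumber E := by
    unfold bnd
    apply Finset.sup_le
    intro i hi
    have hi' : i ≤ ψ.length := (Finset.mem_Icc.mp hi).2
    obtain ⟨c, hc, hsub⟩ := hpref i hi'
    calc (boundary r (ψ.take i)).ncard ≤ (↑c : Set V).ncard :=
          Set.ncard_le_ncard hsub (Set.toFinite _)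
      _ = c.card := Set.ncard_coe_finset c
      _ ≤ maxPebbles (∅ :: tl) := aux_card_le_maxPebbles hc
      _ ≤ pebblingNumber E := hle
  exact le_trans (Nat.sInf_le ⟨ψ, hvisit, rfl⟩) hbnd
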